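/- Double estimate for the δ-optimal recovery error: for any δ > 0 with δ < 1/ξ_0 (so that N_δ ≥ 1), μ_{N_δ}/ξ_{N_δ} ≤ R_δ(A,W)_H ≤ R_{N_δ,δ}(A,W)_H < ( μ_{N_δ−1}²/ξ_{N_δ−1}² + sup_{k ≥ N_δ} μ_k²/ξ_k² )^{1/2}. -/

import Mathlib

noncomputable section

open Filter
open scoped ENNReal RealInnerProductSpace

variable {H : Type*} [NormedAddCommGroup H] [InnerProductSpace ℝ H] [CompleteSpace H]

/-- `f` belongs to the source set `W`. -/
def MemW (w : ℕ → H) (ξ : ℕ → ℝ) (f : H) : Prop :=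
  Summable fun k => ξ k ^ 2 * ⟪f, w k⟫ ^ 2

/-- The `W`-norm of `f`. -/
def normW (w : ℕ → H) (ξ : ℕ → ℝ) (f : H) : ℝ :=
  Real.sqrt (∑' k, ξ k ^ 2 * ⟪f, w k⟫ ^ 2)

/-- The unbounded operator `A`, defined spectrally by `A f = ∑ μ_k ⟨f, w_k⟩ w_k`. -/
def opA (w : ℕ → H) (μ : ℕ → ℝ) (f : H) : H :=
  ∑' k, (μ k * ⟪f, w k⟫) • w k

/-- The worst case recovery error `ε_δ(A, W, G, Ψ)_H` of the pair `(G, Ψ)`. -/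
def recErr (w : ℕ → H) (μ ξ : ℕ → ℝ) (δ : ℝ) {N : ℕ}
    (G : H → Fin N → ℝ) (Ψ : (Fin N → ℝ) → H) : ℝ≥0∞ :=
  ⨆ (f : H) (_ : MemW w ξ f ∧ normW w ξ f ≤ 1) (fδ : H) (_ : ‖f - fδ‖ ≤ δ),
    ENNReal.ofReal ‖opA w μ f - Ψ (G fδ)‖

/-- The `(N,δ)`-optimal recovery error `R_{N,δ}(A, W)_H`. -/
def Ropt (w : ℕ → H) (μ ξ : ℕ → ℝ) (δ : ℝ) (N : ℕ) : ℝ≥0∞ :=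
  ⨅ (G : H → Fin N → ℝ) (_ : Continuous G) (Ψ : (Fin N → ℝ) → H),
    recErr w μ ξ δ G Ψ

/-- The `δ`-optimal recovery error `R_δ(A, W)_H`. -/
def RoptAll (w : ℕ → H) (μ ξ : ℕ → ℝ) (δ : ℝ) : ℝ≥0∞ :=
  ⨅ N : ℕ, Ropt w μ ξ δ N

/-- The critical index `N_δ = min {N ≥ 0 : ξ_N ≥ 1/δ}`. -/
def Ncrit (ξ : ℕ → ℝ) (δ : ℝ) : ℕ := sInf {N : ℕ | 1 / δ ≤ ξ N}

/-- The information map of the truncation method: the first `N` Fourier coefficients. -/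
def Gtrunc (w : ℕ → H) (N : ℕ) (f : H) : Fin N → ℝ := fun k => ⟪f, w k⟫

/-- The recovery algorithm of the truncation method. -/
def Psitrunc (w : ℕ → H) (μ : ℕ → ℝ) (N : ℕ) (x : Fin N → ℝ) : H :=
  ∑ k : Fin N, (μ k * x k) • w k


lemma hsp_of_dense {w : ℕ → H} (hw_dense : Dense (Submodule.span ℝ (Set.range w) : Set H)) :
    ⊤ ≤ (Submodule.span ℝ (Set.range w)).topologicalClosure := by
  intro x _
  have : x ∈ closure (Submodule.span ℝ (Set.range w) : Set H) := by
    rw [hw_dense.closure_eq]; trivial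
  exact this

lemma hasSum_of_summable_sq {w : ℕ → H} (hw_on : Orthonormal ℝ w)
    (hsp : ⊤ ≤ (Submodule.span ℝ (Set.range w)).topologicalClosure)
    (c : ℕ → ℝ) (hc : Summable fun k => c k ^ 2) :
    ∃ x : H, HasSum (fun k => c k • w k) x ∧ ∀ j, ⟪x, w j⟫ = c j := by
  set b := HilbertBasis.mk hw_on hsp with hb
  have hmem : Memℓp c 2 := by
    apply memℓp_gen
    have : (fun i => ‖c i‖ ^ (2 : ℝ≥0∞).toReal) = fun i => c i ^ 2 := by
      funext i
      rw [ENNReal.toReal_ofNat, Real.rpow_two, Real.norm_eq_abs, sq_abs]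
    rw [this]; exact hc
  set cl : lp (fun _ : ℕ => ℝ) 2 := ⟨c, hmem⟩ with hcl
  refine ⟨b.repr.symm cl, ?_, ?_⟩
  · have h1 := b.hasSum_repr_symm cl
    have hcoe : ⇑b = w := HilbertBasis.coe_mk hw_on hsp
    rw [hcoe] at h1
    exact h1
  · intro j
    rw [real_inner_comm]
    have hwj : w j = b j := by rw [hb, HilbertBasis.coe_mk]
    rw [hwj, ← HilbertBasis.repr_apply_apply, LinearIsometryEquiv.apply_symm_apply]

lemma parseval_sq {w : ℕ → H} (hw_on : Orthonormal ℝ w)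
    (hsp : ⊤ ≤ (Submodule.span ℝ (Set.range w)).topologicalClosure)
    (x : H) : HasSum (fun i => ⟪x, w i⟫ ^ 2) (‖x‖ ^ 2) := by
  set b := HilbertBasis.mk hw_on hsp with hb
  have h := b.hasSum_inner_mul_inner x x
  have h2 : (fun i => ⟪x, b i⟫ * ⟪b i, x⟫) = fun i => ⟪x, w i⟫ ^ 2 := by
    funext i
    rw [hb, HilbertBasis.coe_mk, real_inner_comm x (w i), sq]
  rw [h2, real_inner_self_eq_norm_sq] at h
  exact h

set_option maxHeartbeats 1000000 in
/-- double estimate for the `δ`-optimal recovery error. -/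
theorem stmt4
    (w : ℕ → H) (hw_on : Orthonormal ℝ w)
    (hw_dense : Dense (Submodule.span ℝ (Set.range w) : Set H))
    (μ ξ : ℕ → ℝ)
    (hμ0 : 0 < μ 0) (hμmono : Monotone μ) (hμtop : Tendsto μ atTop atTop)
    (hξ0 : 0 < ξ 0) (hξmono : Monotone ξ) (hξtop : Tendsto ξ atTop atTop)
    (hratio : Tendsto (fun k => μ k / ξ k) atTop (nhds 0)) :
    ∀ δ : ℝ, 0 < δ → δ < 1 / ξ 0 →
      ENNReal.ofReal (μ (Ncrit ξ δ) / ξ (Ncrit ξ δ)) ≤ RoptAll w μ ξ δ ∧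
        RoptAll w μ ξ δ ≤ Ropt w μ ξ δ (Ncrit ξ δ) ∧
          Ropt w μ ξ δ (Ncrit ξ δ) <
            ENNReal.ofReal (Real.sqrt
              ((μ (Ncrit ξ δ - 1) / ξ (Ncrit ξ δ - 1)) ^ 2 +
                ⨆ j : ℕ, (μ (Ncrit ξ δ + j) / ξ (Ncrit ξ δ + j)) ^ 2)) := by
  have hsp : ⊤ ≤ (Submodule.span ℝ (Set.range w)).topologicalClosure := hsp_of_dense hw_dense
  have hξpos : ∀ k, 0 < ξ k := fun k => lt_of_lt_of_le hξ0 (hξmono (Nat.zero_le k))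
  have hμpos : ∀ k, 0 < μ k := fun k => lt_of_lt_of_le hμ0 (hμmono (Nat.zero_le k))
  have hwnorm : ∀ k, ‖w k‖ = 1 := fun k => hw_on.1 k
  have hwinner : ∀ i j, ⟪w i, w j⟫ = if i = j then (1:ℝ) else 0 :=
    fun i j => orthonormal_iff_ite.mp hw_on i j
  intro δ hδ hδξ
  set N := Ncrit ξ δ with hNdef
  have hne : {n : ℕ | 1 / δ ≤ ξ n}.Nonempty := (hξtop.eventually_ge_atTop (1 / δ)).exists
  have hNmem : 1 / δ ≤ ξ N := Nat.sInf_mem hne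
  have hN1 : 1 ≤ N := by
    rcases Nat.eq_zero_or_pos N with h0 | h
    · exfalso
      have h1 : 1 / δ ≤ ξ 0 := h0 ▸ hNmem
      have h2 : δ * ξ 0 < 1 := (lt_div_iff₀ hξ0).mp hδξ
      have h3 : 1 ≤ δ * ξ 0 := by
        rw [div_le_iff₀ hδ] at h1; linarith [mul_comm δ (ξ 0)]
      linarith
    · exact h
  have hNsub : ξ (N - 1) < 1 / δ := by
    have hlt : N - 1 < sInf {n : ℕ | 1 / δ ≤ ξ n} := by
      have heq : Ncrit ξ δ = sInf {n : ℕ | 1 / δ ≤ ξ n} := rfl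
      rw [← heq, ← hNdef]; omega
    have : (N - 1) ∉ {n : ℕ | 1 / δ ≤ ξ n} := Nat.notMem_of_lt_sInf hlt
    exact lt_of_not_ge this
  -- the sup S
  set S : ℝ := ⨆ j : ℕ, (μ (N + j) / ξ (N + j)) ^ 2 with hSdef
  have htend : Tendsto (fun j => (μ (N + j) / ξ (N + j)) ^ 2) atTop (nhds 0) := by
    have h1 : Tendsto (fun j : ℕ => N + j) atTop atTop := by
      apply tendsto_atTop_mono (fun j => Nat.le_add_left j N) tendsto_id
    have := (hratio.comp h1).pow 2
    simpa using this
  have hSbdd : BddAbove (Set.range fun j : ℕ => (μ (N + j) / ξ (N + j)) ^ 2) :=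
    htend.bddAbove_range
  have hSle : ∀ j, (μ (N + j) / ξ (N + j)) ^ 2 ≤ S := fun j => le_ciSup hSbdd j
  have hS0 : 0 ≤ S := le_trans (sq_nonneg _) (hSle 0)
  -- global bound on the ratio
  obtain ⟨C, hC⟩ := hratio.bddAbove_range
  have hCle : ∀ k, μ k / ξ k ≤ C := fun k => hC ⟨k, rfl⟩
  have hC0 : 0 ≤ C := le_trans (le_of_lt (div_pos (hμpos 0) (hξpos 0))) (hCle 0)
  have hμle : ∀ k, μ k ^ 2 ≤ C ^ 2 * ξ k ^ 2 := by
    intro k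
    have h1 : μ k ≤ C * ξ k := (div_le_iff₀ (hξpos k)).mp (hCle k)
    nlinarith [hμpos k, hξpos k]
  -- summability of (μ k * ⟪f, w k⟫)^2 for f ∈ W
  have hsummA : ∀ f : H, MemW w ξ f → Summable fun k => (μ k * ⟪f, w k⟫) ^ 2 := by
    intro f hf
    apply Summable.of_nonneg_of_le (fun k => sq_nonneg _) (fun k => ?_)
      ((hf.mul_left (C ^ 2)))
    have := hμle k
    have h2 := sq_nonneg (⟪f, w k⟫ : ℝ)
    calc (μ k * ⟪f, w k⟫) ^ 2 = μ k ^ 2 * ⟪f, w k⟫ ^ 2 := by ring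
    _ ≤ C ^ 2 * ξ k ^ 2 * ⟪f, w k⟫ ^ 2 := by nlinarith
    _ = C ^ 2 * (ξ k ^ 2 * ⟪f, w k⟫ ^ 2) := by ring
  -- `opA` of an admissible f is given by `hasSum_of_summable_sq`
  -- PART 1 : lower bound
  have key_lower : ∀ (n : ℕ) (G : H → Fin n → ℝ) (Ψ : (Fin n → ℝ) → H),
      ENNReal.ofReal (μ N / ξ N) ≤ recErr w μ ξ δ G Ψ := by
    intro n G Ψ
    set f₀ : H := (ξ N)⁻¹ • w N with hf₀
    have hξN := hξpos N
    have hξNne : ξ N ≠ 0 := ne_of_gt hξN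
    have hcf : ∀ k, ⟪f₀, w k⟫ = if k = N then (ξ N)⁻¹ else 0 := by
      intro k
      rw [hf₀, real_inner_smul_left, hwinner N k]
      by_cases h : k = N
      · simp [h]
      · simp [h, Ne.symm h]
    have hfun : (fun k => ξ k ^ 2 * ⟪f₀, w k⟫ ^ 2) = fun k => if k = N then (1:ℝ) else 0 := by
      funext k
      rw [hcf k]
      by_cases h : k = N
      · subst h; rw [if_pos rfl, if_pos rfl, inv_pow, mul_inv_cancel₀ (pow_ne_zero 2 hξNne)]
      · simp [h]
    have hfunneg : (fun k => ξ k ^ 2 * ⟪-f₀, w k⟫ ^ 2) = fun k => if k = N then (1:ℝ) else 0 := by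
      funext k
      rw [inner_neg_left, neg_sq]
      exact congrFun hfun k
    have hsum01 : Summable (fun k => if k = N then (1:ℝ) else 0) := by
      apply summable_of_ne_finset_zero (s := {N})
      intro k hk
      simp only [Finset.mem_singleton] at hk
      simp [hk]
    have htsum01 : ∑' k, (if k = N then (1:ℝ) else 0) = 1 := tsum_ite_eq N 1
    have hmem : MemW w ξ f₀ ∧ normW w ξ f₀ ≤ 1 := by
      constructor
      · rw [MemW, hfun]; exact hsum01
      · rw [normW, hfun, htsum01, Real.sqrt_one]
    have hmemneg : MemW w ξ (-f₀) ∧ normW w ξ (-f₀) ≤ 1 := by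
      constructor
      · rw [MemW, hfunneg]; exact hsum01
      · rw [normW, hfunneg, htsum01, Real.sqrt_one]
    have hA : opA w μ f₀ = (μ N * (ξ N)⁻¹) • w N := by
      rw [opA, tsum_eq_single N]
      · rw [hcf N, if_pos rfl]
      · intro k hk
        rw [hcf k, if_neg hk, mul_zero, zero_smul]
    have hAneg : opA w μ (-f₀) = -opA w μ f₀ := by
      rw [opA, opA, ← tsum_neg]
      congr 1
      funext k
      rw [inner_neg_left, mul_neg, neg_smul]
    have hnormA : ‖opA w μ f₀‖ = μ N / ξ N := by
      rw [hA, norm_smul, hwnorm N, mul_one, Real.norm_eq_abs, abs_of_pos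
        (mul_pos (hμpos N) (inv_pos.mpr hξN)), div_eq_mul_inv]
    have hinvle : (ξ N)⁻¹ ≤ δ := by
      have h1 : 1 ≤ δ * ξ N := by
        rw [div_le_iff₀ hδ] at hNmem; linarith [mul_comm δ (ξ N)]
      have h2 : (ξ N)⁻¹ * ξ N = 1 := inv_mul_cancel₀ hξNne
      nlinarith [inv_pos.mpr hξN]
    have hfd : ‖f₀ - 0‖ ≤ δ := by
      rw [sub_zero, hf₀, norm_smul, hwnorm N, mul_one, Real.norm_eq_abs,
        abs_of_pos (inv_pos.mpr hξN)]
      exact hinvle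
    have hfdneg : ‖-f₀ - 0‖ ≤ δ := by
      rw [sub_zero, norm_neg]
      rw [sub_zero] at hfd
      exact hfd
    have hle : ∀ (f : H), (MemW w ξ f ∧ normW w ξ f ≤ 1) → ∀ fδ, ‖f - fδ‖ ≤ δ →
        ENNReal.ofReal ‖opA w μ f - Ψ (G fδ)‖ ≤ recErr w μ ξ δ G Ψ := by
      intro f hf fδ hfδ
      rw [recErr]
      exact le_iSup_of_le f (le_iSup_of_le hf (le_iSup_of_le fδ (le_iSup_of_le hfδ le_rfl)))
    set h := Ψ (G 0) with hh
    have htri : ‖opA w μ f₀‖ ≤ max ‖opA w μ f₀ - h‖ ‖opA w μ f₀ + h‖ := by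
      have h1 := norm_add_le (opA w μ f₀ - h) (opA w μ f₀ + h)
      have h2 : opA w μ f₀ - h + (opA w μ f₀ + h) = (2:ℝ) • opA w μ f₀ := by
        rw [two_smul]; abel
      rw [h2, norm_smul] at h1
      simp only [Real.norm_ofNat] at h1
      rcases le_total ‖opA w μ f₀ - h‖ ‖opA w μ f₀ + h‖ with hc | hc
      · rw [max_eq_right hc]; linarith
      · rw [max_eq_left hc]; linarith
    rcases le_total ‖opA w μ f₀ - h‖ ‖opA w μ f₀ + h‖ with hc | hc
    · rw [max_eq_right hc] at htri
      have := hle (-f₀) hmemneg 0 hfdneg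
      rw [hAneg] at this
      have heq : ‖-opA w μ f₀ - h‖ = ‖opA w μ f₀ + h‖ := by
        rw [← norm_neg]; congr 1; abel
      rw [heq] at this
      refine le_trans ?_ this
      apply ENNReal.ofReal_le_ofReal
      rw [← hnormA]; exact htri
    · rw [max_eq_left hc] at htri
      have := hle f₀ hmem 0 hfd
      refine le_trans ?_ this
      apply ENNReal.ofReal_le_ofReal
      rw [← hnormA]; exact htri
  refine ⟨?_, ?_, ?_⟩
  · -- lower bound for RoptAll
    rw [RoptAll]
    refine le_iInf fun n => ?_
    rw [Ropt]
    exact le_iInf fun G => le_iInf fun _ => le_iInf fun Ψ => key_lower n G Ψ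
  · rw [RoptAll]; exact iInf_le _ N
  · -- PART 3 : upper bound via truncation
    set Gt := Gtrunc w N with hGt
    set Ψt := Psitrunc w μ N with hΨt
    have hcont : Continuous Gt := by
      have hGteq : Gt = fun f (k : Fin N) => (⟪f, w (k : ℕ)⟫ : ℝ) := rfl
      rw [hGteq]
      exact continuous_pi fun k => Continuous.inner continuous_id continuous_const
    have hRle : Ropt w μ ξ δ N ≤ recErr w μ ξ δ Gt Ψt := by
      rw [Ropt]
      exact iInf_le_of_le Gt (le_trans (iInf_le _ hcont) (iInf_le _ Ψt))
    set B1 : ℝ := Real.sqrt (μ (N - 1) ^ 2 * δ ^ 2 + S) with hB1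
    have hmain : recErr w μ ξ δ Gt Ψt ≤ ENNReal.ofReal B1 := by
      rw [recErr]
      refine iSup_le fun f => iSup_le fun hf => iSup_le fun fδ => iSup_le fun hfδ => ?_
      apply ENNReal.ofReal_le_ofReal
      obtain ⟨hfW, hfn⟩ := hf
      rw [MemW] at hfW
      obtain ⟨xA, hxA_sum, hxA_inner⟩ := hasSum_of_summable_sq hw_on hsp
        (fun k => μ k * ⟪f, w k⟫) (hsummA f hfW)
      have hopA : opA w μ f = xA := by rw [opA]; exact hxA_sum.tsum_eq
      set y := Ψt (Gt fδ) with hy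
      have hyval : y = ∑ k : Fin N, (μ (k : ℕ) * ⟪fδ, w (k : ℕ)⟫) • w (k : ℕ) := rfl
      have hyinner : ∀ j, ⟪y, w j⟫ = if j < N then μ j * ⟪fδ, w j⟫ else 0 := by
        intro j
        rw [hyval, sum_inner]
        by_cases hj : j < N
        · rw [if_pos hj]
          rw [Finset.sum_eq_single_of_mem (⟨j, hj⟩ : Fin N) (Finset.mem_univ _)]
          · rw [real_inner_smul_left, hwinner, if_pos rfl, mul_one]
          · intro b _ hb
            rw [real_inner_smul_left, hwinner,
              if_neg (fun h => hb (Fin.ext h)), mul_zero]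
        · rw [if_neg hj]
          apply Finset.sum_eq_zero
          intro b _
          rw [real_inner_smul_left, hwinner,
            if_neg (fun (h : (b : ℕ) = j) => hj (h ▸ b.isLt)), mul_zero]
      set diff := xA - y with hdiffdef
      have hdiff_inner : ∀ j, ⟪diff, w j⟫ =
          if j < N then μ j * (⟪f, w j⟫ - ⟪fδ, w j⟫) else μ j * ⟪f, w j⟫ := by
        intro j
        rw [hdiffdef, inner_sub_left, hxA_inner, hyinner]
        by_cases hj : j < N
        · rw [if_pos hj, if_pos hj]; ring
        · rw [if_neg hj, if_neg hj]; ring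
      set a : ℕ → ℝ := fun j =>
        if j < N then μ j * (⟪f, w j⟫ - ⟪fδ, w j⟫) else μ j * ⟪f, w j⟫ with ha
      have hpars := parseval_sq hw_on hsp diff
      have hfeq : (fun i => ⟪diff, w i⟫ ^ 2) = fun j => a j ^ 2 :=
        funext fun j => by rw [hdiff_inner j]
      rw [hfeq] at hpars
      have ha2 : Summable fun j => a j ^ 2 := hpars.summable
      have hsplit : ∑ i ∈ Finset.range N, a i ^ 2 + ∑' i, a (i + N) ^ 2 = ∑' i, a i ^ 2 :=
        Summable.sum_add_tsum_nat_add N ha2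
      have hhead : ∑ i ∈ Finset.range N, a i ^ 2 ≤ μ (N - 1) ^ 2 * δ ^ 2 := by
        have h1 : ∑ i ∈ Finset.range N, a i ^ 2 ≤
            μ (N - 1) ^ 2 * ∑ i ∈ Finset.range N, (⟪f, w i⟫ - ⟪fδ, w i⟫) ^ 2 := by
          rw [Finset.mul_sum]
          apply Finset.sum_le_sum
          intro i hi
          rw [Finset.mem_range] at hi
          rw [ha]
          dsimp only
          rw [if_pos hi]
          have hmu : μ i ≤ μ (N - 1) := hμmono (by omega)
          have hmu2 : μ i ^ 2 ≤ μ (N - 1) ^ 2 := by nlinarith [hμpos i]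
          nlinarith [mul_nonneg (sub_nonneg.mpr hmu2)
            (sq_nonneg ((⟪f, w i⟫ : ℝ) - ⟪fδ, w i⟫))]
        have h2 : ∑ i ∈ Finset.range N, (⟪f, w i⟫ - ⟪fδ, w i⟫ : ℝ) ^ 2 ≤ ‖f - fδ‖ ^ 2 := by
          have hb := hw_on.sum_inner_products_le (s := Finset.range N) (f - fδ)
          refine le_trans (le_of_eq ?_) hb
          apply Finset.sum_congr rfl
          intro i _
          rw [Real.norm_eq_abs, sq_abs, inner_sub_right,
            real_inner_comm f (w i), real_inner_comm fδ (w i)]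
        have h3 : ‖f - fδ‖ ^ 2 ≤ δ ^ 2 := by nlinarith [norm_nonneg (f - fδ)]
        nlinarith [sq_nonneg (μ (N - 1))]
      have hWle1 : ∑' k, ξ k ^ 2 * ⟪f, w k⟫ ^ 2 ≤ 1 := by
        have h0 : (0:ℝ) ≤ ∑' k, ξ k ^ 2 * ⟪f, w k⟫ ^ 2 := tsum_nonneg fun k => by positivity
        rw [normW] at hfn
        nlinarith [Real.sq_sqrt h0, Real.sqrt_nonneg (∑' k, ξ k ^ 2 * ⟪f, w k⟫ ^ 2)]
      have htail : ∑' i, a (i + N) ^ 2 ≤ S := by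
        have hsummL : Summable fun i => a (i + N) ^ 2 := (summable_nat_add_iff (f := fun j => a j ^ 2) N).mpr ha2
        have hsummW : Summable fun i => ξ (i + N) ^ 2 * ⟪f, w (i + N)⟫ ^ 2 :=
          (summable_nat_add_iff (f := fun k => ξ k ^ 2 * ⟪f, w k⟫ ^ 2) N).mpr hfW
        have hpt : ∀ i : ℕ, a (i + N) ^ 2 ≤ S * (ξ (i + N) ^ 2 * ⟪f, w (i + N)⟫ ^ 2) := by
          intro i
          rw [ha]
          dsimp only
          rw [if_neg (by omega)]
          have hξi := hξpos (i + N)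
          have heq : (μ (i + N) * ⟪f, w (i + N)⟫) ^ 2 =
              (μ (i + N) / ξ (i + N)) ^ 2 * (ξ (i + N) ^ 2 * ⟪f, w (i + N)⟫ ^ 2) := by
            field_simp
          rw [heq]
          have hSle' : (μ (i + N) / ξ (i + N)) ^ 2 ≤ S := by
            have := hSle i
            rwa [Nat.add_comm N i] at this
          exact mul_le_mul_of_nonneg_right hSle' (by positivity)
        have htailW : ∑' i, ξ (i + N) ^ 2 * ⟪f, w (i + N)⟫ ^ 2 ≤ 1 := by
          have hsp2 := Summable.sum_add_tsum_nat_add (f := fun k => ξ k ^ 2 * ⟪f, w k⟫ ^ 2) N hfW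
          have hhd : (0:ℝ) ≤ ∑ i ∈ Finset.range N, ξ i ^ 2 * ⟪f, w i⟫ ^ 2 :=
            Finset.sum_nonneg fun i _ => by positivity
          linarith [hWle1]
        calc ∑' i, a (i + N) ^ 2
            ≤ ∑' i, S * (ξ (i + N) ^ 2 * ⟪f, w (i + N)⟫ ^ 2) :=
              Summable.tsum_le_tsum hpt hsummL (hsummW.mul_left S)
          _ = S * ∑' i, ξ (i + N) ^ 2 * ⟪f, w (i + N)⟫ ^ 2 := tsum_mul_left
          _ ≤ S * 1 := mul_le_mul_of_nonneg_left htailW hS0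
          _ = S := mul_one S
      have hsq : ‖diff‖ ^ 2 ≤ μ (N - 1) ^ 2 * δ ^ 2 + S := by
        rw [← hpars.tsum_eq, ← hsplit]
        linarith
      have hnd : ‖opA w μ f - y‖ ≤ B1 := by
        rw [hopA, ← hdiffdef, hB1]
        rw [← Real.sqrt_sq (norm_nonneg diff)]
        exact Real.sqrt_le_sqrt hsq
      exact hnd
    have hstrict : ENNReal.ofReal B1 <
        ENNReal.ofReal (Real.sqrt ((μ (N - 1) / ξ (N - 1)) ^ 2 + S)) := by
      have hξN1 := hξpos (N - 1)
      have hμN1 := hμpos (N - 1)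
      have hlt : μ (N - 1) ^ 2 * δ ^ 2 + S < (μ (N - 1) / ξ (N - 1)) ^ 2 + S := by
        have hδξ1 : δ * ξ (N - 1) < 1 := by
          rw [lt_div_iff₀ hδ] at hNsub
          linarith [mul_comm δ (ξ (N - 1))]
        have h1 : μ (N - 1) ^ 2 * δ ^ 2 < (μ (N - 1) / ξ (N - 1)) ^ 2 := by
          rw [div_pow, lt_div_iff₀ (by positivity)]
          have h2 : δ ^ 2 * ξ (N - 1) ^ 2 < 1 := by nlinarith [mul_pos hδ hξN1]
          nlinarith [mul_pos hμN1 hμN1, mul_pos hδ hξN1]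
        linarith
      have hsq2 : B1 < Real.sqrt ((μ (N - 1) / ξ (N - 1)) ^ 2 + S) := by
        rw [hB1]
        exact Real.sqrt_lt_sqrt (by positivity) hlt
      rw [ENNReal.ofReal_lt_ofReal_iff]
      · exact hsq2
      · apply Real.sqrt_pos.mpr
        have : (0:ℝ) < (μ (N - 1) / ξ (N - 1)) ^ 2 := by positivity
        linarith
    exact lt_of_le_of_lt (le_trans hRle hmain) hstrict
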